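/- arXiv:2303.15560 — 9 statements merged into one kernel-verified Lean document; each statement's English description precedes it below -/
import Mathlib

section
/- Let C2 be the set of quadruples (a,b,c,d) of non-negative integers with b ≥ c ≥ d. Define θ21(a,b,c,d) = (a',b',c',d') by a' = max(d, 2c−b, b−2a), b' = max(c, a+d, a+2c−b), c' = min(b, 2b−2c+d, d+2a), d' = min(a, c−d, b−c), and θ12(a,b,c,d) = (a'',b'',c'',d'') by a'' = max(d, c−b, b−a), b'' = max(c, a−2b+2c, a+2d), c'' = min(b, 2b−c+d, a+d), d'' = min(a, 2b−c, c−2d). Then for every (a,b,c,d) in C2 one has θ12(θ21(a,b,c,d)) = (a,b,c,d). -/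
/-- Littelmann's transition map θ21 on adapted strings of type C2. -/
def theta21 : ℤ × ℤ × ℤ × ℤ → ℤ × ℤ × ℤ × ℤ
  | (a, b, c, d) =>
    (max d (max (2*c - b) (b - 2*a)),
     max c (max (a + d) (a + 2*c - b)),
     min b (min (2*b - 2*c + d) (d + 2*a)),
     min a (min (c - d) (b - c)))

/-- Littelmann's transition map θ12 on adapted strings of type C2. -/
def theta12 : ℤ × ℤ × ℤ × ℤ → ℤ × ℤ × ℤ × ℤ
  | (a, b, c, d) =>
    (max d (max (c - b) (b - a)),
     max c (max (a - 2*b + 2*c) (a + 2*d)),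
     min b (min (2*b - c + d) (a + d)),
     min a (min (2*b - c) (c - 2*d)))

/-- For every quadruple in the cone C2 (non-negative integers with b ≥ c ≥ d),
θ12 ∘ θ21 is the identity. -/
theorem theta12_theta21 (a b c d : ℤ)
    (ha : 0 ≤ a) (hb : 0 ≤ b) (hc : 0 ≤ c) (hd : 0 ≤ d)
    (hbc : b ≥ c) (hcd : c ≥ d) :
    theta12 (theta21 (a, b, c, d)) = (a, b, c, d) := by
  simp only [theta21, theta12, Prod.mk.injEq]
  omega
end

section
/- Let λ1, λ2 ≥ 0 be integers and (a,b,c,d) non-negative integers satisfying the Littelmann inequalities for (λ1,λ2). Assume 0 < d < λ1 and b = λ1 − 2d + 2c. Then (a, b, c+1, d+1) satisfies the Littelmann inequalities for (λ1, λ2+1) together with the preatom condition for (λ1, λ2+1); in particular b ≥ c+1. -/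
/-- The Littelmann inequalities for (λ1,λ2) on a quadruple (a,b,c,d). -/
def LittelmannIneq (l1 l2 a b c d : ℤ) : Prop :=
  b ≥ c ∧ c ≥ d ∧ d ≤ l1 ∧ c ≤ l2 + d ∧ b ≤ l1 - 2*d + 2*c ∧ a ≤ l2 + d - 2*c + b

/-- The preatom condition for (λ1,λ2) on a quadruple (a,b,c,d). -/
def PreatomCond (l1 _l2 b c d : ℤ) : Prop :=
  d = 0 ∨ d = l1 ∨ b = l1 - 2*d + 2*c

/-- If (a,b,c,d) satisfies the Littelmann inequalities for (λ1,λ2),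
0 < d < λ1 and b = λ1 − 2d + 2c, then (a,b,c+1,d+1) satisfies the Littelmann
inequalities and the preatom condition for (λ1,λ2+1); in particular b ≥ c+1. -/
theorem psi_case_interior (l1 l2 a b c d : ℤ)
    (hl1 : 0 ≤ l1) (hl2 : 0 ≤ l2)
    (ha : 0 ≤ a) (hb : 0 ≤ b) (hc : 0 ≤ c) (hd : 0 < d) (hdl : d < l1)
    (hL : LittelmannIneq l1 l2 a b c d)
    (hbeq : b = l1 - 2*d + 2*c) :
    LittelmannIneq l1 (l2 + 1) a b (c+1) (d+1) ∧
      PreatomCond l1 (l2 + 1) b (c+1) (d+1) ∧ b ≥ c + 1 := by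
  obtain ⟨h1, h2, h3, h4, h5, h6⟩ := hL
  refine ⟨⟨by omega, by omega, by omega, by omega, by omega, by omega⟩,
    Or.inr (Or.inr (by omega)), by omega⟩
end

section
/- Let λ1, λ2 ≥ 0 be integers and (a,b,c,0) non-negative integers satisfying the Littelmann inequalities for (λ1,λ2) (in particular b ≥ c ≥ 0, c ≤ λ2, b ≤ λ1+2c, a ≤ λ2−2c+b). Then the maximal integer k with 0 ≤ k ≤ λ2 such that (a, b−k, c−k, 0) consists of non-negative integers satisfying the Littelmann inequalities for (λ1, λ2−k) equals min(c, λ1 + 2c − b). -/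
/-- For a quadruple (a,b,c,0) satisfying the Littelmann inequalities for (λ1,λ2),
the maximal 0 ≤ k ≤ λ2 such that (a,b−k,c−k,0) consists of non-negative integers
satisfying the Littelmann inequalities for (λ1,λ2−k) is min(c, λ1+2c−b). -/
theorem atomic_number_d_zero (l1 l2 a b c : ℤ)
    (hl1 : 0 ≤ l1) (hl2 : 0 ≤ l2)
    (ha : 0 ≤ a) (hb : 0 ≤ b) (hc : 0 ≤ c)
    (hL : LittelmannIneq l1 l2 a b c 0) :
    IsGreatest {k : ℤ | 0 ≤ k ∧ k ≤ l2 ∧ 0 ≤ a ∧ 0 ≤ b - k ∧ 0 ≤ c - k ∧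
        LittelmannIneq l1 (l2 - k) a (b - k) (c - k) 0}
      (min c (l1 + 2*c - b)) := by
  obtain ⟨h1, h2, h3, h4, h5, h6⟩ := hL
  constructor
  · simp only [Set.mem_setOf_eq, LittelmannIneq]
    omega
  · intro k hk
    obtain ⟨k1, k2, k3, k4, k5, kL⟩ := hk
    obtain ⟨g1, g2, g3, g4, g5, g6⟩ := kL
    omega
end

section
/- Let W be the group of linear transformations of Q² generated by s1(x,y) = (−x, x+y) and s2(x,y) = (x+2y, −y). Let λ1, λ2 be non-negative integers, λ = (λ1,λ2), and µ = (µ1,µ2) ∈ Z². Then µ lies in the convex hull of the W-orbit of λ if and only if the following inequalities hold: |µ1| ≤ λ1 + 2λ2, |µ1 + µ2| ≤ λ1 + λ2, |µ2| ≤ λ1 + λ2, and |µ1 + 2µ2| ≤ λ1 + 2λ2. -/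
/-- The simple reflection s1(x,y) = (−x, x+y) as a linear map on ℚ². -/
def s1Lin : (ℚ × ℚ) →ₗ[ℚ] (ℚ × ℚ) :=
  LinearMap.prod (-(LinearMap.fst ℚ ℚ ℚ)) (LinearMap.fst ℚ ℚ ℚ + LinearMap.snd ℚ ℚ ℚ)

/-- The simple reflection s2(x,y) = (x+2y, −y) as a linear map on ℚ². -/
def s2Lin : (ℚ × ℚ) →ₗ[ℚ] (ℚ × ℚ) :=
  LinearMap.prod (LinearMap.fst ℚ ℚ ℚ + (2 : ℚ) • LinearMap.snd ℚ ℚ ℚ)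
    (-(LinearMap.snd ℚ ℚ ℚ))

lemma s1Lin_involutive : Function.Involutive s1Lin := by
  intro p
  simp [s1Lin, LinearMap.prod_apply]

lemma s2Lin_involutive : Function.Involutive s2Lin := by
  intro p
  simp [s2Lin, LinearMap.prod_apply]

/-- s1 as a linear automorphism of ℚ². -/
def s1Equiv : (ℚ × ℚ) ≃ₗ[ℚ] (ℚ × ℚ) :=
  { s1Lin with
    invFun := s1Lin
    left_inv := s1Lin_involutive
    right_inv := s1Lin_involutive }

/-- s2 as a linear automorphism of ℚ². -/
def s2Equiv : (ℚ × ℚ) ≃ₗ[ℚ] (ℚ × ℚ) :=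
  { s2Lin with
    invFun := s2Lin
    left_inv := s2Lin_involutive
    right_inv := s2Lin_involutive }

/-- The Weyl group of type C2: the group of linear transformations of ℚ²
generated by s1 and s2. -/
def WeylC2 : Subgroup ((ℚ × ℚ) ≃ₗ[ℚ] (ℚ × ℚ)) :=
  Subgroup.closure {s1Equiv, s2Equiv}

namespace C2Octagon

@[simp] lemma s1_apply (x y : ℚ) : s1Equiv (x, y) = (-x, x + y) := rfl
@[simp] lemma s2_apply (x y : ℚ) : s2Equiv (x, y) = (x + 2*y, -y) := rfl

lemma s1_inv_apply (p : ℚ × ℚ) : s1Equiv⁻¹ p = s1Equiv p := rfl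
lemma s2_inv_apply (p : ℚ × ℚ) : s2Equiv⁻¹ p = s2Equiv p := rfl

lemma s1_mem : s1Equiv ∈ WeylC2 := Subgroup.subset_closure (by simp)
lemma s2_mem : s2Equiv ∈ WeylC2 := Subgroup.subset_closure (by simp)

/-- The octagon region. -/
def K (a b : ℚ) : Set (ℚ × ℚ) :=
  {q | |q.1| ≤ b ∧ |q.1 + q.2| ≤ a ∧ |q.2| ≤ a ∧ |q.1 + 2*q.2| ≤ b}

lemma combo_abs {u v c α β : ℚ} (hu : |u| ≤ c) (hv : |v| ≤ c) (hα : 0 ≤ α)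
    (hβ : 0 ≤ β) (hαβ : α + β = 1) : |α*u + β*v| ≤ c := by
  calc |α*u + β*v| ≤ |α*u| + |β*v| := abs_add_le _ _
    _ = α*|u| + β*|v| := by rw [abs_mul, abs_mul, abs_of_nonneg hα, abs_of_nonneg hβ]
    _ ≤ α*c + β*c :=
        add_le_add (mul_le_mul_of_nonneg_left hu hα) (mul_le_mul_of_nonneg_left hv hβ)
    _ = c := by rw [← add_mul, hαβ, one_mul]

lemma K_convex (a b : ℚ) : Convex ℚ (K a b) := by
  rintro p ⟨h1, h2, h3, h4⟩ q ⟨g1, g2, g3, g4⟩ α β hα hβ hαβ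
  have e1 : (α • p + β • q).1 = α * p.1 + β * q.1 := rfl
  have e2 : (α • p + β • q).2 = α * p.2 + β * q.2 := rfl
  refine ⟨?_, ?_, ?_, ?_⟩
  · rw [e1]; exact combo_abs h1 g1 hα hβ hαβ
  · rw [e1, e2]
    have : α * p.1 + β * q.1 + (α * p.2 + β * q.2)
        = α * (p.1 + p.2) + β * (q.1 + q.2) := by ring
    rw [this]; exact combo_abs h2 g2 hα hβ hαβ
  · rw [e2]; exact combo_abs h3 g3 hα hβ hαβ
  · rw [e1, e2]
    have : α * p.1 + β * q.1 + 2*(α * p.2 + β * q.2)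
        = α * (p.1 + 2*p.2) + β * (q.1 + 2*q.2) := by ring
    rw [this]; exact combo_abs h4 g4 hα hβ hαβ

lemma s1_maps_K {a b : ℚ} {p : ℚ × ℚ} (hp : p ∈ K a b) : s1Equiv p ∈ K a b := by
  obtain ⟨h1, h2, h3, h4⟩ := hp
  obtain ⟨x, y⟩ := p
  simp only [K, Set.mem_setOf_eq, s1_apply] at *
  refine ⟨?_, ?_, ?_, ?_⟩
  · simpa using h1
  · have e : -x + (x + y) = y := by ring
    rw [e]; exact h3
  · exact h2
  · have e : -x + 2*(x + y) = x + 2*y := by ring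
    rw [e]; exact h4

lemma s2_maps_K {a b : ℚ} {p : ℚ × ℚ} (hp : p ∈ K a b) : s2Equiv p ∈ K a b := by
  obtain ⟨h1, h2, h3, h4⟩ := hp
  obtain ⟨x, y⟩ := p
  simp only [K, Set.mem_setOf_eq, s2_apply] at *
  refine ⟨?_, ?_, ?_, ?_⟩
  · exact h4
  · have e : x + 2*y + -y = x + y := by ring
    rw [e]; exact h2
  · simpa using h3
  · have e : x + 2*y + 2*(-y) = x := by ring
    rw [e]; exact h1

lemma W_preserves_K (a b : ℚ) {w : (ℚ × ℚ) ≃ₗ[ℚ] (ℚ × ℚ)} (hw : w ∈ WeylC2) :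
    (∀ p ∈ K a b, w p ∈ K a b) ∧ (∀ p ∈ K a b, w⁻¹ p ∈ K a b) := by
  refine Subgroup.closure_induction (fun x hx => ?_) ?_ (fun x y _ _ ihx ihy => ?_)
    (fun x _ ihx => ?_) hw
  · rcases hx with hx | hx
    · subst hx
      exact ⟨fun p hp => s1_maps_K hp, fun p hp => by rw [s1_inv_apply]; exact s1_maps_K hp⟩
    · rw [Set.mem_singleton_iff] at hx
      subst hx
      exact ⟨fun p hp => s2_maps_K hp, fun p hp => by rw [s2_inv_apply]; exact s2_maps_K hp⟩
  · exact ⟨fun p hp => hp, fun p hp => by simpa using hp⟩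
  · constructor
    · intro p hp
      exact ihx.1 _ (ihy.1 p hp)
    · intro p hp
      rw [mul_inv_rev]
      exact ihy.2 _ (ihx.2 p hp)
  · exact ⟨ihx.2, fun p hp => by rw [inv_inv]; exact ihx.1 p hp⟩

/-- The orbit of a point under the Weyl group. -/
def orb (l : ℚ × ℚ) : Set (ℚ × ℚ) :=
  (fun w : (ℚ × ℚ) ≃ₗ[ℚ] (ℚ × ℚ) => w l) '' (WeylC2 : Set ((ℚ × ℚ) ≃ₗ[ℚ] (ℚ × ℚ)))

lemma hull_inv {l : ℚ × ℚ} {w : (ℚ × ℚ) ≃ₗ[ℚ] (ℚ × ℚ)} (hw : w ∈ WeylC2)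
    {p : ℚ × ℚ} (hp : p ∈ convexHull ℚ (orb l)) : w p ∈ convexHull ℚ (orb l) := by
  have h1 : (w : (ℚ × ℚ) →ₗ[ℚ] (ℚ × ℚ)) '' orb l ⊆ orb l := by
    rintro _ ⟨q, ⟨u, hu, rfl⟩, rfl⟩
    exact ⟨w * u, mul_mem hw hu, rfl⟩
  have h2 : w p ∈ (w : (ℚ × ℚ) →ₗ[ℚ] (ℚ × ℚ)) '' convexHull ℚ (orb l) := ⟨p, hp, rfl⟩
  rw [LinearMap.image_convexHull] at h2
  exact convexHull_mono h1 h2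

lemma combo4 {s : Set (ℚ × ℚ)} (hs : Convex ℚ s) {p1 p2 p3 p4 : ℚ × ℚ}
    (h1 : p1 ∈ s) (h2 : p2 ∈ s) (h3 : p3 ∈ s) (h4 : p4 ∈ s)
    {c1 c2 c3 c4 : ℚ} (n1 : 0 ≤ c1) (n2 : 0 ≤ c2) (n3 : 0 ≤ c3) (n4 : 0 ≤ c4)
    (hsum : c1 + c2 + c3 + c4 = 1) :
    c1 • p1 + c2 • p2 + c3 • p3 + c4 • p4 ∈ s := by
  have h := hs.sum_mem (t := Finset.univ) (w := ![c1, c2, c3, c4])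
    (z := ![p1, p2, p3, p4]) ?_ ?_ ?_
  · simpa [Fin.sum_univ_four] using h
  · intro i _; fin_cases i <;> assumption
  · simp [Fin.sum_univ_four]; linarith
  · intro i _; fin_cases i <;> assumption

lemma orbit_pts (l1 l2 : ℚ) :
    (l1, l2) ∈ orb (l1, l2) ∧ (l1 + 2*l2, -l2) ∈ orb (l1, l2) ∧
    (-l1, l1 + l2) ∈ orb (l1, l2) ∧ (-l1, -l2) ∈ orb (l1, l2) := by
  refine ⟨⟨1, one_mem _, rfl⟩, ⟨s2Equiv, s2_mem, rfl⟩, ⟨s1Equiv, s1_mem, rfl⟩,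
    ⟨s1Equiv * s2Equiv * s1Equiv * s2Equiv,
      mul_mem (mul_mem (mul_mem s1_mem s2_mem) s1_mem) s2_mem, ?_⟩⟩
  show s1Equiv (s2Equiv (s1Equiv (s2Equiv (l1, l2)))) = _
  simp only [s1_apply, s2_apply]
  rw [Prod.mk.injEq]
  constructor <;> ring

/-- Dominant points of the octagon lie in the convex hull of the orbit. -/
lemma dominant_mem_hull (l1 l2 : ℚ) (hl1 : 0 ≤ l1) (hl2 : 0 ≤ l2) (x y : ℚ)
    (hx : 0 ≤ x) (hy : 0 ≤ y) (h2 : x + y ≤ l1 + l2) (h4 : x + 2*y ≤ l1 + 2*l2) :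
    (x, y) ∈ convexHull ℚ (orb (l1, l2)) := by
  obtain ⟨hv1, hv2, hv3, hv8⟩ := orbit_pts l1 l2
  have hs : Convex ℚ (convexHull ℚ (orb (l1, l2))) := convex_convexHull ℚ _
  have m1 := subset_convexHull ℚ _ hv1
  have m2 := subset_convexHull ℚ _ hv2
  have m3 := subset_convexHull ℚ _ hv3
  have m8 := subset_convexHull ℚ _ hv8
  by_cases hA : 0 < l2 ∧ l1 * y ≤ l2 * x
  · -- triangle 0, (l1+l2, 0), (l1, l2)
    obtain ⟨hl2', hxy⟩ := hA
    have ha : (0:ℚ) < l1 + l2 := by linarith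
    set μ1 : ℚ := (x*l2 - l1*y) / (l2*(l1+l2)) with hμ1
    set μ2 : ℚ := y / l2 with hμ2
    have hμ1n : 0 ≤ μ1 := div_nonneg (by linarith) (by positivity)
    have hμ2n : 0 ≤ μ2 := div_nonneg hy (le_of_lt hl2')
    have hkey : μ1 + μ2 = (x + y) / (l1 + l2) := by
      rw [hμ1, hμ2]
      field_simp
      ring
    have hr : μ1 + μ2 ≤ 1 := by
      rw [hkey, div_le_one ha]
      linarith
    have heq : (x, y) = (μ1/2 + μ2 + (1 - μ1 - μ2)/2) • (l1, l2)
        + (μ1/2) • (l1 + 2*l2, -l2) + (0:ℚ) • (-l1, l1+l2)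
        + ((1 - μ1 - μ2)/2) • (-l1, -l2) := by
      have hx' : x = μ1 * (l1 + l2) + μ2 * l1 := by
        rw [hμ1, hμ2]; field_simp; ring
      have hy' : y = μ2 * l2 := by rw [hμ2]; field_simp
      show (x, y) = (_, _)
      rw [Prod.mk.injEq]
      constructor
      · show x = (μ1/2 + μ2 + (1 - μ1 - μ2)/2) * l1 + (μ1/2) * (l1 + 2*l2)
          + 0 * (-l1) + ((1 - μ1 - μ2)/2) * (-l1)
        rw [hx']; ring
      · show y = (μ1/2 + μ2 + (1 - μ1 - μ2)/2) * l2 + (μ1/2) * (-l2)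
          + 0 * (l1 + l2) + ((1 - μ1 - μ2)/2) * (-l2)
        rw [hy']; ring
    rw [heq]
    exact combo4 hs m1 m2 m3 m8 (by linarith) (by linarith) le_rfl (by linarith)
      (by ring)
  · by_cases hdeg : l1 = 0 ∧ l2 = 0
    · obtain ⟨e1, e2⟩ := hdeg
      have hpt : ((x, y) : ℚ × ℚ) = (l1, l2) := by
        rw [Prod.mk.injEq]
        constructor <;> linarith
      rw [hpt]
      exact m1
    · -- case B: l1 > 0 and l2 * x ≤ l1 * y
      push_neg at hA
      have hl1' : 0 < l1 := by
        rcases eq_or_lt_of_le hl1 with h | h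
        · exfalso
          rcases eq_or_lt_of_le hl2 with h' | h'
          · exact hdeg ⟨h.symm, h'.symm⟩
          · have := hA h'
            nlinarith
        · exact h
      have hxy : l2 * x ≤ l1 * y := by
        rcases eq_or_lt_of_le hl2 with h' | h'
        · rw [← h']; nlinarith
        · linarith [hA h']
      have hb : (0:ℚ) < l1 + 2*l2 := by linarith
      set μ2 : ℚ := x / l1 with hμ2
      set μ3 : ℚ := 2*(l1*y - l2*x) / (l1*(l1 + 2*l2)) with hμ3
      have hμ2n : 0 ≤ μ2 := div_nonneg hx (le_of_lt hl1')
      have hμ3n : 0 ≤ μ3 := div_nonneg (by linarith) (by positivity)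
      have hkey : μ2 + μ3 = (x + 2*y) / (l1 + 2*l2) := by
        rw [hμ2, hμ3]
        field_simp
        ring
      have hr : μ2 + μ3 ≤ 1 := by
        rw [hkey, div_le_one hb]
        linarith
      have heq : (x, y) = (μ2 + μ3/2 + (1 - μ2 - μ3)/2) • (l1, l2)
          + (0:ℚ) • (l1 + 2*l2, -l2) + (μ3/2) • (-l1, l1+l2)
          + ((1 - μ2 - μ3)/2) • (-l1, -l2) := by
        have hx' : x = μ2 * l1 := by rw [hμ2]; field_simp
        have hy' : y = μ2 * l2 + μ3/2 * (l1 + 2*l2) := by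
          rw [hμ2, hμ3]; field_simp; ring
        show (x, y) = (_, _)
        rw [Prod.mk.injEq]
        constructor
        · show x = (μ2 + μ3/2 + (1 - μ2 - μ3)/2) * l1 + 0 * (l1 + 2*l2)
            + (μ3/2) * (-l1) + ((1 - μ2 - μ3)/2) * (-l1)
          rw [hx']; ring
        · show y = (μ2 + μ3/2 + (1 - μ2 - μ3)/2) * l2 + 0 * (-l2)
            + (μ3/2) * (l1 + l2) + ((1 - μ2 - μ3)/2) * (-l2)
          rw [hy']; ring
      rw [heq]
      exact combo4 hs m1 m2 m3 m8 (by linarith) le_rfl (by linarith) (by linarith)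
        (by ring)

/-- Every point can be moved to the dominant chamber by an element of the
Weyl group. -/
lemma exists_dominant (p : ℚ × ℚ) :
    ∃ w ∈ WeylC2, 0 ≤ (w p).1 ∧ 0 ≤ (w p).2 := by
  obtain ⟨x, y⟩ := p
  rcases le_or_gt 0 (x + y) with h2 | h2 <;> rcases le_or_gt 0 (x + 2*y) with h4 | h4
  · -- x+y ≥ 0, x+2y ≥ 0
    rcases le_or_gt 0 x with hx | hx
    · rcases le_or_gt 0 y with hy | hy
      · exact ⟨1, one_mem _, hx, hy⟩
      · refine ⟨s2Equiv, s2_mem, ?_, ?_⟩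
        · show (0:ℚ) ≤ x + 2*y
          linarith
        · show (0:ℚ) ≤ -y
          linarith
    · refine ⟨s1Equiv, s1_mem, ?_, ?_⟩
      · show (0:ℚ) ≤ -x
        linarith
      · show (0:ℚ) ≤ x + y
        linarith
  · -- x+y ≥ 0, x+2y < 0 : use s1*s2, giving (-(x+2y), x+y)
    refine ⟨s1Equiv * s2Equiv, mul_mem s1_mem s2_mem, ?_, ?_⟩
    · show (0:ℚ) ≤ -(x + 2*y)
      linarith
    · show (0:ℚ) ≤ x + 2*y + -y
      linarith
  · -- x+y < 0, x+2y ≥ 0 : use s2*s1, giving (x+2y, -(x+y))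
    refine ⟨s2Equiv * s1Equiv, mul_mem s2_mem s1_mem, ?_, ?_⟩
    · show (0:ℚ) ≤ -x + 2*(x + y)
      linarith
    · show (0:ℚ) ≤ -(x + y)
      linarith
  · -- x+y < 0, x+2y < 0
    rcases le_or_gt 0 x with hx | hx
    · -- s2*s1*s2 : (x, -(x+y))
      refine ⟨s2Equiv * s1Equiv * s2Equiv, mul_mem (mul_mem s2_mem s1_mem) s2_mem, ?_, ?_⟩
      · show (0:ℚ) ≤ -(x + 2*y) + 2*(x + 2*y + -y)
        linarith
      · show (0:ℚ) ≤ -(x + 2*y + -y)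
        linarith
    · rcases le_or_gt 0 y with hy | hy
      · -- s1*s2*s1 : (-(x+2y), y)
        refine ⟨s1Equiv * s2Equiv * s1Equiv, mul_mem (mul_mem s1_mem s2_mem) s1_mem, ?_, ?_⟩
        · show (0:ℚ) ≤ -(-x + 2*(x + y))
          linarith
        · show (0:ℚ) ≤ -x + 2*(x + y) + -(x + y)
          linarith
      · -- s1*s2*s1*s2 : (-x, -y)
        refine ⟨s1Equiv * s2Equiv * s1Equiv * s2Equiv,
          mul_mem (mul_mem (mul_mem s1_mem s2_mem) s1_mem) s2_mem, ?_, ?_⟩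
        · show (0:ℚ) ≤ -(-(x + 2*y) + 2*(x + 2*y + -y))
          linarith
        · show (0:ℚ) ≤ -(x + 2*y) + 2*(x + 2*y + -y) + -(x + 2*y + -y)
          linarith

end C2Octagon

open C2Octagon in
/-- An integral weight µ lies in the convex hull of the Weyl group orbit of a
dominant weight λ = (λ1,λ2) iff the four octagon inequalities hold. -/
theorem mem_convexHull_orbit_iff (l1 l2 : ℤ) (hl1 : 0 ≤ l1) (hl2 : 0 ≤ l2)
    (m1 m2 : ℤ) :
    ((m1 : ℚ), (m2 : ℚ)) ∈
        convexHull ℚ ((fun w : (ℚ × ℚ) ≃ₗ[ℚ] (ℚ × ℚ) =>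
          w ((l1 : ℚ), (l2 : ℚ))) '' (WeylC2 : Set ((ℚ × ℚ) ≃ₗ[ℚ] (ℚ × ℚ)))) ↔
      (|m1| ≤ l1 + 2*l2 ∧ |m1 + m2| ≤ l1 + l2 ∧ |m2| ≤ l1 + l2 ∧
        |m1 + 2*m2| ≤ l1 + 2*l2) := by
  have hl1q : (0:ℚ) ≤ (l1:ℚ) := by exact_mod_cast hl1
  have hl2q : (0:ℚ) ≤ (l2:ℚ) := by exact_mod_cast hl2
  have hlK : ((l1:ℚ), (l2:ℚ)) ∈ K ((l1:ℚ) + l2) ((l1:ℚ) + 2*l2) := by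
    refine ⟨?_, ?_, ?_, ?_⟩ <;> simp only <;>
      rw [abs_of_nonneg (by linarith)] <;> linarith
  constructor
  · intro h
    have horb : orb ((l1:ℚ), (l2:ℚ)) ⊆ K ((l1:ℚ) + l2) ((l1:ℚ) + 2*l2) := by
      rintro _ ⟨w, hw, rfl⟩
      exact (W_preserves_K _ _ hw).1 _ hlK
    have hmem : ((m1:ℚ), (m2:ℚ)) ∈ K ((l1:ℚ) + l2) ((l1:ℚ) + 2*l2) :=
      convexHull_min horb (K_convex _ _) h
    obtain ⟨g1, g2, g3, g4⟩ := hmem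
    simp only at g1 g2 g3 g4
    refine ⟨?_, ?_, ?_, ?_⟩
    · exact_mod_cast g1
    · exact_mod_cast g2
    · exact_mod_cast g3
    · exact_mod_cast g4
  · rintro ⟨h1, h2, h3, h4⟩
    have hpK : ((m1:ℚ), (m2:ℚ)) ∈ K ((l1:ℚ) + l2) ((l1:ℚ) + 2*l2) := by
      refine ⟨?_, ?_, ?_, ?_⟩
      · show |(m1:ℚ)| ≤ (l1:ℚ) + 2*l2
        exact_mod_cast h1
      · show |(m1:ℚ) + (m2:ℚ)| ≤ (l1:ℚ) + l2
        exact_mod_cast h2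
      · show |(m2:ℚ)| ≤ (l1:ℚ) + l2
        exact_mod_cast h3
      · show |(m1:ℚ) + 2*(m2:ℚ)| ≤ (l1:ℚ) + 2*l2
        exact_mod_cast h4
    obtain ⟨w, hw, hd1, hd2⟩ := exists_dominant ((m1:ℚ), (m2:ℚ))
    obtain ⟨k1, k2, k3, k4⟩ := (W_preserves_K _ _ hw).1 _ hpK
    have hm : w ((m1:ℚ), (m2:ℚ)) ∈ convexHull ℚ (orb ((l1:ℚ), (l2:ℚ))) := by
      have hd := dominant_mem_hull (l1:ℚ) (l2:ℚ) hl1q hl2q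
        (w ((m1:ℚ), (m2:ℚ))).1 (w ((m1:ℚ), (m2:ℚ))).2 hd1 hd2
        (le_trans (le_abs_self _) k2) (le_trans (le_abs_self _) k4)
      simpa using hd
    have hfin := hull_inv (inv_mem hw) hm
    have hww : w⁻¹ (w ((m1:ℚ), (m2:ℚ))) = ((m1:ℚ), (m2:ℚ)) := w.symm_apply_apply _
    rw [hww] at hfin
    exact hfin
end

section
/- Let λ1, λ2 ≥ 0 and µ1, µ2 be integers with µ1 ≡ λ1 (mod 2), and suppose µ = (µ1,µ2) satisfies the octagon inequalities for λ = (λ1,λ2): |µ1| ≤ λ1+2λ2, |µ1+µ2| ≤ λ1+λ2, |µ2| ≤ λ1+λ2, |µ1+2µ2| ≤ λ1+2λ2. Then the maximal integer k ≥ 0 such that (µ1, µ2 − k) also satisfies the octagon inequalities for λ equals λ2 + µ2 + min(λ1, (λ1+µ1)/2, λ1+µ1). -/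
/-- The octagon inequalities: µ lies in the convex hull of the Weyl orbit of λ. -/
def OctIneq (l1 l2 m1 m2 : ℤ) : Prop :=
  |m1| ≤ l1 + 2*l2 ∧ |m1 + m2| ≤ l1 + l2 ∧ |m2| ≤ l1 + l2 ∧ |m1 + 2*m2| ≤ l1 + 2*l2

/-- φ̂21(µ,λ): the maximal k ≥ 0 with (µ1, µ2 − k) still in the octagon equals
λ2 + µ2 + min(λ1, (λ1+µ1)/2, λ1+µ1). -/
theorem phihat21_formula (l1 l2 m1 m2 : ℤ) (hl1 : 0 ≤ l1) (hl2 : 0 ≤ l2)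
    (hpar : m1 ≡ l1 [ZMOD 2]) (hoct : OctIneq l1 l2 m1 m2) :
    IsGreatest {k : ℤ | 0 ≤ k ∧ OctIneq l1 l2 m1 (m2 - k)}
      (l2 + m2 + min l1 (min ((l1 + m1) / 2) (l1 + m1))) := by
  have hdvd : (2:ℤ) ∣ l1 - m1 := Int.ModEq.dvd hpar
  obtain ⟨h1, h2, h3, h4⟩ := hoct
  rw [abs_le] at h1 h2 h3 h4
  constructor
  · refine ⟨?_, ?_, ?_, ?_, ?_⟩ <;> first | omega | (rw [abs_le]; omega)
  · rintro k ⟨hk0, hk1, hk2, hk3, hk4⟩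
    rw [abs_le] at hk1 hk2 hk3 hk4
    omega
end

section
/- Let λ1, λ2 ≥ 0 and µ1, µ2 be integers with µ1 ≡ λ1 (mod 2), and suppose (µ1,µ2) satisfies the octagon inequalities for (λ1,λ2): |µ1| ≤ λ1+2λ2, |µ1+µ2| ≤ λ1+λ2, |µ2| ≤ λ1+λ2, |µ1+2µ2| ≤ λ1+2λ2. Then the maximal integer k ≥ 0 such that (µ1 − 2k, µ2) also satisfies the octagon inequalities for (λ1,λ2) equals (λ1+µ1)/2 + min(λ2 + µ2, ⌊(λ2+µ2)/2⌋, λ2). -/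
/-- φ̂12(µ,λ): the maximal k ≥ 0 with (µ1 − 2k, µ2) still in the octagon equals
(λ1+µ1)/2 + min(λ2+µ2, ⌊(λ2+µ2)/2⌋, λ2). -/
theorem phihat12_formula (l1 l2 m1 m2 : ℤ) (hl1 : 0 ≤ l1) (hl2 : 0 ≤ l2)
    (hpar : m1 ≡ l1 [ZMOD 2]) (hoct : OctIneq l1 l2 m1 m2) :
    IsGreatest {k : ℤ | 0 ≤ k ∧ OctIneq l1 l2 (m1 - 2*k) m2}
      ((l1 + m1) / 2 + min (l2 + m2) (min (Int.fdiv (l2 + m2) 2) l2)) := by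
  have hdvd : (2:ℤ) ∣ l1 - m1 := (Int.ModEq.dvd hpar)
  rw [Int.fdiv_eq_ediv_of_nonneg _ (by norm_num)]
  simp only [OctIneq, abs_le] at hoct ⊢
  constructor
  · simp only [Set.mem_setOf_eq, OctIneq, abs_le]
    omega
  · intro b hb
    simp only [Set.mem_setOf_eq, OctIneq, abs_le] at hb
    omega
end

section
/- Let λ1, λ2 ≥ 0 and µ1, µ2 be integers with µ1 ≡ λ1 (mod 2), and suppose (µ1,µ2) satisfies the octagon inequalities for (λ1,λ2): |µ1| ≤ λ1+2λ2, |µ1+µ2| ≤ λ1+λ2, |µ2| ≤ λ1+λ2, |µ1+2µ2| ≤ λ1+2λ2. Then the maximal integer k ≥ 0 such that (µ1 + 2k, µ2 − 2k) also satisfies the octagon inequalities for (λ1,λ2) equals (λ1−µ1)/2 + min(λ2 + µ1 + µ2, ⌊(λ2+µ1+µ2)/2⌋, λ2). -/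
/-- φ̂2(µ,λ): the maximal k ≥ 0 with (µ1 + 2k, µ2 − 2k) still in the octagon
equals (λ1−µ1)/2 + min(λ2+µ1+µ2, ⌊(λ2+µ1+µ2)/2⌋, λ2). -/
theorem phihat2_formula (l1 l2 m1 m2 : ℤ) (hl1 : 0 ≤ l1) (hl2 : 0 ≤ l2)
    (hpar : m1 ≡ l1 [ZMOD 2]) (hoct : OctIneq l1 l2 m1 m2) :
    IsGreatest {k : ℤ | 0 ≤ k ∧ OctIneq l1 l2 (m1 + 2*k) (m2 - 2*k)}
      ((l1 - m1) / 2 + min (l2 + m1 + m2) (min (Int.fdiv (l2 + m1 + m2) 2) l2)) := by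
  obtain ⟨h1, h2, h3, h4⟩ := hoct
  rw [abs_le] at h1 h2 h3 h4
  have hd : (2:ℤ) ∣ (l1 - m1) := hpar.dvd
  rw [Int.fdiv_eq_ediv_of_nonneg _ (by norm_num)]
  simp only [IsGreatest, Set.mem_setOf_eq, OctIneq, upperBounds]
  constructor
  · refine ⟨by omega, ?_, ?_, ?_, ?_⟩ <;> rw [abs_le] <;> omega
  · rintro k ⟨hk0, k1, k2, k3, k4⟩
    rw [abs_le] at k1 k2 k3 k4
    omega
end

section
/- Let λ1, λ2 ≥ 0 be integers and (a,b,c,d) non-negative integers satisfying the Littelmann inequalities for (λ1,λ2) and the at-zero condition: either (c = 0 and d = 0), or (b = λ1 − 2d + 2c and (d ≤ 1 or c = λ2 + d)). Set µ1 = λ1 + 2a − 2b + 2c − 2d and µ2 = λ2 + (b + d) − 2(a + c). If µ1 < 0, then λ1 + 2a − 2b + 2c − 2d + max(d, 2c − b, b − 2a) = max(0, µ1 + µ2 − λ2, −µ2 − λ2). -/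
/-- Formula for φ1(T) of an element T with atomic number 0 and weight of
negative first coordinate. -/
theorem phi1_at_zero (l1 l2 a b c d m1 m2 : ℤ)
    (hl1 : 0 ≤ l1) (hl2 : 0 ≤ l2)
    (ha : 0 ≤ a) (hb : 0 ≤ b) (hc : 0 ≤ c) (hd : 0 ≤ d)
    (hL : LittelmannIneq l1 l2 a b c d)
    (hat0 : (c = 0 ∧ d = 0) ∨ (b = l1 - 2*d + 2*c ∧ (d ≤ 1 ∨ c = l2 + d)))
    (hm1 : m1 = l1 + 2*a - 2*b + 2*c - 2*d)
    (hm2 : m2 = l2 + (b + d) - 2*(a + c))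
    (hm1neg : m1 < 0) :
    l1 + 2*a - 2*b + 2*c - 2*d + max d (max (2*c - b) (b - 2*a)) =
      max 0 (max (m1 + m2 - l2) (-m2 - l2)) := by
  obtain ⟨h1,h2,h3,h4,h5,h6⟩ := hL
  omega
end

section
/- For every non-negative integer k, the number of pairs (µ1, µ2) of integers with µ1 even satisfying the octagon inequalities for λ = (0, k), namely |µ1| ≤ 2k, |µ1 + µ2| ≤ k, |µ2| ≤ k, |µ1 + 2µ2| ≤ 2k, equals (k+1)² + k². -/
open Finset

private lemma evens_filter_eq (n : ℕ) :
    (Finset.Icc (-(n:ℤ)) n).filter (fun u => Even u)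
      = (Finset.Icc (-((n/2 : ℕ) : ℤ)) ((n/2 : ℕ) : ℤ)).image (fun a => 2*a) := by
  ext u
  simp only [Finset.mem_filter, Finset.mem_Icc, Finset.mem_image, Int.even_iff]
  constructor
  · rintro ⟨⟨h1, h2⟩, he⟩
    exact ⟨u / 2, by omega, by omega⟩
  · rintro ⟨a, ⟨h1, h2⟩, rfl⟩
    refine ⟨⟨by omega, by omega⟩, by omega⟩

private lemma card_evens (n : ℕ) :
    ((Finset.Icc (-(n:ℤ)) n).filter (fun u => Even u)).card = 2 * (n/2) + 1 := by
  rw [evens_filter_eq]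
  rw [Finset.card_image_of_injective _ (mul_right_injective₀ (by norm_num : (2:ℤ) ≠ 0))]
  rw [Int.card_Icc]
  omega

private lemma card_odds (n : ℕ) :
    ((Finset.Icc (-(n:ℤ)) n).filter (fun u => ¬ Even u)).card = 2 * n - 2 * (n/2) := by
  have h := Finset.card_filter_add_card_filter_not
    (s := Finset.Icc (-(n:ℤ)) n) (p := fun u => Even u)
  rw [card_evens] at h
  rw [Int.card_Icc] at h
  omega

/-- The number of integral weights below kϖ2 in type C2: the pairs (µ1,µ2)
with µ1 even satisfying the octagon inequalities for (0,k) number (k+1)² + k². -/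
theorem card_weights_below_komega2 (k : ℕ) :
    Set.ncard {p : ℤ × ℤ | Even p.1 ∧ |p.1| ≤ 2*(k : ℤ) ∧
        |p.1 + p.2| ≤ (k : ℤ) ∧ |p.2| ≤ (k : ℤ) ∧ |p.1 + 2*p.2| ≤ 2*(k : ℤ)} =
      (k + 1)^2 + k^2 := by
  classical
  set E := (Finset.Icc (-(k:ℤ)) k).filter (fun u => Even u) with hE
  set O := (Finset.Icc (-(k:ℤ)) k).filter (fun u => ¬ Even u) with hO
  set F := ((E ×ˢ E) ∪ (O ×ˢ O)).image (fun q : ℤ×ℤ => (q.1 - q.2, q.2)) with hF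
  have hset : {p : ℤ × ℤ | Even p.1 ∧ |p.1| ≤ 2*(k : ℤ) ∧
        |p.1 + p.2| ≤ (k : ℤ) ∧ |p.2| ≤ (k : ℤ) ∧ |p.1 + 2*p.2| ≤ 2*(k : ℤ)} = ↑F := by
    ext p
    simp only [hF, hE, hO, Set.mem_setOf_eq, Finset.coe_image, Set.mem_image,
      Finset.mem_coe, Finset.mem_union, Finset.mem_product, Finset.mem_filter,
      Finset.mem_Icc, abs_le, Int.even_iff]
    constructor
    · rintro ⟨he, h1, h2, h3, h4⟩
      refine ⟨(p.1 + p.2, p.2), ?_, by simp⟩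
      rcases Int.even_or_odd p.2 with h | h
      · left
        rw [Int.even_iff] at h
        exact ⟨⟨⟨h2.1, h2.2⟩, by omega⟩, ⟨⟨h3.1, h3.2⟩, h⟩⟩
      · right
        rw [Int.odd_iff] at h
        exact ⟨⟨⟨h2.1, h2.2⟩, by omega⟩, ⟨⟨h3.1, h3.2⟩, by omega⟩⟩
    · rintro ⟨⟨u, v⟩, hq, rfl⟩
      simp only at hq ⊢
      rcases hq with ⟨⟨⟨hu1, hu2⟩, hue⟩, ⟨⟨hv1, hv2⟩, hve⟩⟩ |
        ⟨⟨⟨hu1, hu2⟩, huo⟩, ⟨⟨hv1, hv2⟩, hvo⟩⟩ <;>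
      refine ⟨by omega, by omega, by omega, by omega, by omega⟩
  rw [hset, Set.ncard_coe_finset]
  have hinj : Function.Injective (fun q : ℤ×ℤ => (q.1 - q.2, q.2)) := by
    rintro ⟨a1, a2⟩ ⟨b1, b2⟩ h
    simp only [Prod.mk.injEq] at h
    obtain ⟨h1, h2⟩ := h
    simp only [Prod.mk.injEq]
    omega
  rw [hF, Finset.card_image_of_injective _ hinj]
  have hdisj : Disjoint (E ×ˢ E) (O ×ˢ O) := by
    rw [Finset.disjoint_left]
    rintro ⟨u, v⟩ h1 h2
    simp only [hE, hO, Finset.mem_product, Finset.mem_filter] at h1 h2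
    exact h2.1.2 h1.1.2
  rw [Finset.card_union_of_disjoint hdisj, Finset.card_product, Finset.card_product,
    hE, hO, card_evens, card_odds]
  rcases Nat.even_or_odd k with ⟨m, hm⟩ | ⟨m, hm⟩ <;> subst hm
  · have h1 : (m + m) / 2 = m := by omega
    rw [h1]
    have h2 : 2 * (m + m) - 2 * m = m + m := by omega
    rw [h2]; ring
  · have h1 : (2 * m + 1) / 2 = m := by omega
    rw [h1]
    have h2 : 2 * (2 * m + 1) - 2 * m = 2 * m + 2 := by omega
    rw [h2]; ring
end
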